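/- Let L be a unimodular lattice of rank 10 (free ℤ-module of rank 10 with symmetric bilinear form b such that the induced map L → Hom(L, ℤ) is an isomorphism), and suppose f₁, …, f₁₀ ∈ L satisfy b(fᵢ, fⱼ) = 1 - δᵢⱼ. Then f₁ + ⋯ + f₁₀ is divisible by 3 in L, i.e., there exists Δ ∈ L with 3Δ = f₁ + ⋯ + f₁₀. (This Δ is the class of the Fano polarization.) -/

import Mathlib

theorem fano_polarization_exists
    {L : Type*} [AddCommGroup L] [Module ℤ L] [Module.Free ℤ L] [Module.Finite ℤ L]
    (hrank : Module.finrank ℤ L = 10)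
    (b : L →ₗ[ℤ] L →ₗ[ℤ] ℤ) (hsymm : ∀ x y, b x y = b y x)
    (hunimod : Function.Bijective (fun x : L => b x))
    (f : Fin 10 → L)
    (hf : ∀ i j, b (f i) (f j) = if i = j then 0 else 1) :
    ∃ Δ : L, (3 : ℤ) • Δ = ∑ i, f i := by
  classical
  have hnzd : Module.IsTorsionFree ℤ L := inferInstance
  -- bridge between the ℤ-group smul and the module smul
  have sconv := fun (n : ℤ) (x : L) => (Int.cast_smul_eq_zsmul ℤ n x).symm
  simp only [Int.cast_id] at sconv
  -- bilinearity over integer scalars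
  have bsm : ∀ (n : ℤ) (y z : L), b (n • y) z = n * b y z := by
    intro n y z
    rw [sconv n y]
    exact DFunLike.congr_fun (b.map_smul n y) z
  have bsm2 : ∀ (n : ℤ) (y z : L), b y (n • z) = n * b y z := by
    intro n y z
    rw [sconv n z]
    exact (b y).map_smul n z
  -- pairing of an integral combination of the f's with f j
  have pair : ∀ (c : Fin 10 → ℤ) (j : Fin 10),
      b (∑ i, c i • f i) (f j) = (∑ i, c i) - c j := by
    intro c j
    have h1 : b (∑ i, c i • f i) (f j) = ∑ i, c i * (if i = j then 0 else 1) := by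
      rw [map_sum, LinearMap.sum_apply]
      exact Finset.sum_congr rfl fun i _ => by rw [bsm, hf]
    rw [h1]
    have h2 : ∀ i : Fin 10, c i * (if i = j then 0 else 1)
        = c i - (if i = j then c i else 0) := by
      intro i; split <;> simp
    simp [h2, Finset.sum_sub_distrib]
  -- anything orthogonal to all the f's is zero
  have kerA : ∀ w : L, (∀ j, b w (f j) = 0) → w = 0 := by
    intro w hw
    by_contra hw0
    have li : LinearIndependent ℤ (fun o : Option (Fin 10) => o.elim w f) := by
      rw [Fintype.linearIndependent_iff]
      intro g hg
      rw [Fintype.sum_option] at hg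
      simp only [Option.elim] at hg
      simp only [← sconv] at hg
      have key : ∀ j, g (some j) = ∑ i, g (some i) := by
        intro j
        have h := congrArg (fun z => b z (f j)) hg
        simp only [map_add, LinearMap.add_apply, map_zero, LinearMap.zero_apply] at h
        have hp : b (∑ x : Fin 10, g (some x) • f x) (f j)
            = (∑ i, g (some i)) - g (some j) := pair _ j
        rw [hp, bsm, hw j, mul_zero, zero_add] at h
        linarith
      have hS : (∑ i, g (some i)) = 0 := by
        have h10 : (∑ j, g (some j)) = ∑ _j : Fin 10, (∑ i, g (some i)) :=
          Finset.sum_congr rfl fun j _ => key j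
        simp only [Finset.sum_const, Finset.card_univ, Fintype.card_fin,
          nsmul_eq_mul, Nat.cast_ofNat] at h10
        linarith
      have hci : ∀ i, g (some i) = 0 := fun i => by rw [key i, hS]
      have hgw : g none • w = 0 := by
        simp only [hci, zero_smul, Finset.sum_const_zero, add_zero] at hg
        exact hg
      have hnone : g none = 0 := by
        rw [sconv] at hgw
        exact (smul_eq_zero.mp hgw).resolve_right hw0
      intro o
      cases o with
      | none => exact hnone
      | some i => exact hci i
    have hcard := li.fintype_card_le_finrank
    rw [hrank, Fintype.card_option, Fintype.card_fin] at hcard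
    omega
  -- key representation: 9 x lies in the span of the f's with explicit coefficients
  have rep : ∀ x : L, (9 : ℤ) • x
      = ∑ i, ((∑ j, b x (f j)) - 9 * b x (f i)) • f i := by
    intro x
    have hz := kerA ((9 : ℤ) • x
      - ∑ i, ((∑ j, b x (f j)) - 9 * b x (f i)) • f i) ?_
    · rw [sub_eq_zero] at hz; exact hz
    · intro j
      have hsum : (∑ i : Fin 10, ((∑ j, b x (f j)) - 9 * b x (f i)))
          = ∑ j, b x (f j) := by
        rw [Finset.sum_sub_distrib, Finset.sum_const, Finset.card_univ,
          Fintype.card_fin, nsmul_eq_mul, ← Finset.mul_sum]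
        push_cast
        ring
      have hp : b (∑ i, ((∑ j, b x (f j)) - 9 * b x (f i)) • f i) (f j)
          = (∑ i : Fin 10, ((∑ j, b x (f j)) - 9 * b x (f i)))
            - ((∑ j, b x (f j)) - 9 * b x (f j)) := pair _ j
      rw [map_sub, LinearMap.sub_apply, bsm, hp, hsum]
      ring
  -- divisibility by 3 of pairings with the sum
  have hdvd : ∀ x : L, (3 : ℤ) ∣ ∑ j, b x (f j) := by
    intro x
    have h := congrArg (fun z => b x z) (rep x)
    simp only [map_sum, bsm2] at h
    -- h : 9 * b x x = ∑ i, ((∑ j, b x (f j)) - 9 * b x (f i)) * b x (f i)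
    have h2 : (∑ i, ((∑ j, b x (f j)) - 9 * b x (f i)) * b x (f i))
        = (∑ j, b x (f j)) * (∑ j, b x (f j))
          - 9 * ∑ i, b x (f i) * b x (f i) := by
      rw [Finset.sum_congr rfl (fun i _ => (by ring :
          ((∑ j, b x (f j)) - 9 * b x (f i)) * b x (f i)
            = (∑ j, b x (f j)) * b x (f i) - 9 * (b x (f i) * b x (f i))))]
      rw [Finset.sum_sub_distrib, ← Finset.mul_sum, ← Finset.mul_sum]
    rw [h2] at h
    have h4 : (3 : ℤ) ∣ (∑ j, b x (f j)) ^ 2 := by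
      refine ⟨3 * (b x x + ∑ i, b x (f i) * b x (f i)), ?_⟩
      rw [sq]
      linarith
    exact Int.prime_three.dvd_of_dvd_pow h4
  -- build Δ
  set s : L := ∑ i, f i with hs
  have hbs : ∀ x : L, b s x = ∑ j, b x (f j) := by
    intro x
    rw [hsymm s x, hs, map_sum]
  obtain ⟨I, B⟩ := Module.Free.exists_basis (R := ℤ) (M := L)
  set φ : L →ₗ[ℤ] ℤ := B.constr ℤ (fun i => (b s (B i)) / 3) with hφ
  have hμ : φ + φ + φ = b s := by
    apply B.ext
    intro i
    simp only [LinearMap.add_apply, hφ, Module.Basis.constr_basis]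
    have hd : (3 : ℤ) ∣ b s (B i) := by rw [hbs]; exact hdvd _
    have := Int.ediv_mul_cancel hd
    linarith
  obtain ⟨Δ, hΔ⟩ := hunimod.2 φ
  have hΔ' : b Δ = φ := hΔ
  refine ⟨Δ, hunimod.1 ?_⟩
  show b ((3 : ℤ) • Δ) = b s
  apply LinearMap.ext
  intro z
  rw [bsm 3 Δ z, hΔ', ← hμ, LinearMap.add_apply, LinearMap.add_apply]
  ring
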